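/- For every positive integer n and all real numbers s, s₀ with 0 ≤ s₀ < s, one has 0 < F(s) e^s − F(s₀) e^{s₀} < s^{n-1} e^s, where F(s) = ∑_{r=0}^{n-1} (-1)^{n-r-1} ((n-1)!/r!) s^r. -/

import Mathlib

open Real Finset

noncomputable def Fn (n : ℕ) (x : ℝ) : ℝ :=
  ∑ r ∈ Finset.range n,
    (-1 : ℝ) ^ (n - r - 1) * ((Nat.factorial (n - 1) : ℝ) / (Nat.factorial r : ℝ)) * x ^ r

lemma Fn_succ (n : ℕ) (hn : 1 ≤ n) (x : ℝ) :
    Fn (n + 1) x = x ^ n - n * Fn n x := by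
  unfold Fn
  rw [Finset.sum_range_succ, Finset.mul_sum]
  have h1 : (-1 : ℝ) ^ (n + 1 - n - 1) * ((Nat.factorial (n + 1 - 1) : ℝ) / (Nat.factorial n : ℝ)) * x ^ n = x ^ n := by
    simp [div_self (by positivity : (Nat.factorial n : ℝ) ≠ 0)]
  rw [h1]
  have h2 : ∀ r ∈ Finset.range n,
      (-1 : ℝ) ^ (n + 1 - r - 1) * ((Nat.factorial (n + 1 - 1) : ℝ) / (Nat.factorial r : ℝ)) * x ^ r
      = -((n : ℝ) * ((-1 : ℝ) ^ (n - r - 1) * ((Nat.factorial (n - 1) : ℝ) / (Nat.factorial r : ℝ)) * x ^ r)) := by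
    intro r hr
    rw [Finset.mem_range] at hr
    have e1 : n + 1 - r - 1 = (n - r - 1) + 1 := by omega
    have e2 : (Nat.factorial (n + 1 - 1) : ℝ) = (n : ℝ) * (Nat.factorial (n - 1) : ℝ) := by
      have : n + 1 - 1 = (n - 1) + 1 := by omega
      rw [this, Nat.factorial_succ]
      push_cast
      have : (n : ℝ) = ((n - 1 : ℕ) : ℝ) + 1 := by
        have : n = (n - 1) + 1 := by omega
        rw [this]; push_cast; ring
      rw [this]
    rw [e1, e2, pow_succ]
    ring
  rw [Finset.sum_congr rfl h2, Finset.sum_neg_distrib]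
  ring

lemma key (n : ℕ) (hn : 1 ≤ n) (x : ℝ) :
    HasDerivAt (fun y => Fn n y * Real.exp y) (x ^ (n - 1) * Real.exp x) x := by
  induction n, hn using Nat.le_induction generalizing x with
  | base =>
    have : (fun y => Fn 1 y * Real.exp y) = fun y => Real.exp y := by
      funext y; unfold Fn; simp
    rw [this]
    simpa using Real.hasDerivAt_exp x
  | succ n hn ih =>
    have heq : (fun y => Fn (n + 1) y * Real.exp y)
        = fun y => y ^ n * Real.exp y - (n : ℝ) * (Fn n y * Real.exp y) := by
      funext y; rw [Fn_succ n hn y]; ring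
    rw [heq]
    have hpow : HasDerivAt (fun y : ℝ => y ^ n * Real.exp y)
        ((n : ℝ) * x ^ (n - 1) * Real.exp x + x ^ n * Real.exp x) x :=
      (hasDerivAt_pow n x).mul (Real.hasDerivAt_exp x)
    have hmul : HasDerivAt (fun y => (n : ℝ) * (Fn n y * Real.exp y))
        ((n : ℝ) * (x ^ (n - 1) * Real.exp x)) x := (ih x).const_mul _
    have : HasDerivAt (fun y => y ^ n * Real.exp y - (n : ℝ) * (Fn n y * Real.exp y)) _ x := hpow.sub hmul
    convert this using 1
    simp only [Nat.add_sub_cancel]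
    ring

theorem stmt_1 (n : ℕ) (hn : 1 ≤ n)
    (F : ℝ → ℝ)
    (hF : ∀ x : ℝ, F x = ∑ r ∈ Finset.range n,
      (-1 : ℝ) ^ (n - r - 1) * ((Nat.factorial (n - 1) : ℝ) / (Nat.factorial r : ℝ)) * x ^ r)
    (s s₀ : ℝ) (h0 : 0 ≤ s₀) (h1 : s₀ < s) :
    0 < F s * Real.exp s - F s₀ * Real.exp s₀ ∧
      F s * Real.exp s - F s₀ * Real.exp s₀ < s ^ (n - 1) * Real.exp s := by
  have hFn : F = Fn n := by funext x; rw [hF x]; rfl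
  subst hFn
  have hs : (0 : ℝ) < s := lt_of_le_of_lt h0 h1
  set g : ℝ → ℝ := fun y => Fn n y * Real.exp y with hg
  have hderiv : ∀ x : ℝ, HasDerivAt g (x ^ (n - 1) * Real.exp x) x := key n hn
  -- lower bound: g strictly monotone on [s₀, s]
  have hmono : StrictMonoOn g (Set.Icc s₀ s) := by
    apply strictMonoOn_of_deriv_pos (convex_Icc s₀ s)
    · exact fun x _ => ((hderiv x).differentiableAt.continuousAt).continuousWithinAt
    · intro x hx
      rw [interior_Icc] at hx
      rw [(hderiv x).deriv]
      have hx0 : 0 < x := lt_of_le_of_lt h0 hx.1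
      positivity
  have hlow : g s₀ < g s :=
    hmono (Set.mem_Icc.2 ⟨le_refl _, le_of_lt h1⟩) (Set.mem_Icc.2 ⟨le_of_lt h1, le_refl _⟩) h1
  have hgs : g s = Fn n s * Real.exp s := rfl
  have hgs0 : g s₀ = Fn n s₀ * Real.exp s₀ := rfl
  constructor
  · linarith
  -- upper bound: h x = s^(n-1) * exp x - g x is monotone on [s₀, s]
  · have hmono2 : MonotoneOn (fun x => s ^ (n - 1) * Real.exp x - g x) (Set.Icc s₀ s) := by
      apply monotoneOn_of_deriv_nonneg (convex_Icc s₀ s)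
      · intro x _
        have hd : HasDerivAt (fun x => s ^ (n - 1) * Real.exp x - g x)
            (s ^ (n - 1) * Real.exp x - x ^ (n - 1) * Real.exp x) x :=
          ((Real.hasDerivAt_exp x).const_mul _).sub (hderiv x)
        exact hd.differentiableAt.continuousAt.continuousWithinAt
      · intro x _
        have hd : HasDerivAt (fun x => s ^ (n - 1) * Real.exp x - g x)
            (s ^ (n - 1) * Real.exp x - x ^ (n - 1) * Real.exp x) x :=
          ((Real.hasDerivAt_exp x).const_mul _).sub (hderiv x)
        exact hd.differentiableAt.differentiableWithinAt
      · intro x hx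
        rw [interior_Icc] at hx
        have hd : HasDerivAt (fun x => s ^ (n - 1) * Real.exp x - g x)
            (s ^ (n - 1) * Real.exp x - x ^ (n - 1) * Real.exp x) x :=
          ((Real.hasDerivAt_exp x).const_mul _).sub (hderiv x)
        rw [hd.deriv]
        have hx0 : 0 ≤ x := le_trans h0 (le_of_lt hx.1)
        have hxs : x ≤ s := le_of_lt hx.2
        have : x ^ (n - 1) ≤ s ^ (n - 1) := pow_le_pow_left₀ hx0 hxs _
        have he : 0 < Real.exp x := Real.exp_pos x
        nlinarith
    have h2 : s ^ (n - 1) * Real.exp s₀ - g s₀ ≤ s ^ (n - 1) * Real.exp s - g s :=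
      hmono2 (Set.mem_Icc.2 ⟨le_refl _, le_of_lt h1⟩) (Set.mem_Icc.2 ⟨le_of_lt h1, le_refl _⟩) (le_of_lt h1)
    have hsn : 0 < s ^ (n - 1) := pow_pos hs _
    have he0 : 0 < Real.exp s₀ := Real.exp_pos s₀
    nlinarith
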